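/- Let Φ : ℙ_n → ℙ_n be a map on positive definite n×n matrices that is order preserving (C₁ ≤ C₂ implies Φ(C₁) ≤ Φ(C₂)), positively homogeneous (Φ(αC) = αΦ(C) for α > 0), unital (Φ(I) = I), and trace-subpreserving (Tr Φ(C) ≤ Tr C for all C). Then for every positive definite C, the eigenvalue vector of Φ(C) is weakly majorized by that of C. -/

import Mathlib

open Matrix ComplexOrder

namespace Heron

variable {n : ℕ}

def WeakMaj {n : ℕ} (x y : Fin n → ℝ) : Prop :=
  ∀ s : Finset (Fin n), ∃ t : Finset (Fin n),
    t.card = s.card ∧ ∑ i ∈ s, x i ≤ ∑ i ∈ t, y i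

def Maj {n : ℕ} (x y : Fin n → ℝ) : Prop :=
  WeakMaj x y ∧ ∑ i, x i = ∑ i, y i

lemma sandwich_posSemidef {S T : Matrix (Fin n) (Fin n) ℂ} (hS : S.IsHermitian)
    (hT : T.PosSemidef) : (S * T * S).PosSemidef := by
  have h := hT.mul_mul_conjTranspose_same S
  rwa [hS.eq] at h

/-- The square root of a positive semidefinite matrix, as defined in the older Mathlib
(`Matrix.PosSemidef.sqrt`, since removed). -/
noncomputable def _root_.Matrix.PosSemidef.sqrt {m 𝕜 : Type*} [Fintype m] [RCLike 𝕜]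
    [DecidableEq m] {A : Matrix m m 𝕜} (hA : A.PosSemidef) : Matrix m m 𝕜 :=
  hA.1.eigenvectorUnitary.1 * diagonal ((↑) ∘ (√·) ∘ hA.1.eigenvalues) *
  (star hA.1.eigenvectorUnitary : Matrix m m 𝕜)

lemma _root_.Matrix.PosSemidef.posSemidef_sqrt {m 𝕜 : Type*} [Fintype m] [RCLike 𝕜]
    [DecidableEq m] {A : Matrix m m 𝕜} (hA : A.PosSemidef) : hA.sqrt.PosSemidef := by
  unfold Matrix.PosSemidef.sqrt
  have h := Matrix.PosSemidef.mul_mul_conjTranspose_same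
    (Matrix.posSemidef_diagonal_iff.mpr fun i => by
      simpa using Real.sqrt_nonneg (hA.1.eigenvalues i) :
      (diagonal ((↑) ∘ (√·) ∘ hA.1.eigenvalues : m → 𝕜)).PosSemidef)
    (hA.1.eigenvectorUnitary : Matrix m m 𝕜)
  simpa [Matrix.star_eq_conjTranspose] using h

noncomputable def geomMean {A B : Matrix (Fin n) (Fin n) ℂ}
    (hA : A.PosDef) (hB : B.PosDef) : Matrix (Fin n) (Fin n) ℂ :=
  hA.posSemidef.sqrt *
    (sandwich_posSemidef hA.posSemidef.posSemidef_sqrt.isHermitian.inv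
        hB.posSemidef).sqrt *
    hA.posSemidef.sqrt

lemma geomMean_posSemidef {A B : Matrix (Fin n) (Fin n) ℂ}
    (hA : A.PosDef) (hB : B.PosDef) : (geomMean hA hB).PosSemidef :=
  sandwich_posSemidef hA.posSemidef.posSemidef_sqrt.isHermitian
    (Matrix.PosSemidef.posSemidef_sqrt _)

noncomputable def specMean {A B : Matrix (Fin n) (Fin n) ℂ}
    (hA : A.PosDef) (hB : B.PosDef) : Matrix (Fin n) (Fin n) ℂ :=
  (geomMean_posSemidef hA.inv hB).sqrt * A * (geomMean_posSemidef hA.inv hB).sqrt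

def HasPosSpectrum (M : Matrix (Fin n) (Fin n) ℂ) : Prop :=
  ∀ z ∈ spectrum ℂ M, 0 < z.re ∧ z.im = 0

def IsPrincipalSqrt (M S : Matrix (Fin n) (Fin n) ℂ) : Prop :=
  S * S = M ∧ HasPosSpectrum S

noncomputable def absMat (Y : Matrix (Fin n) (Fin n) ℂ) : Matrix (Fin n) (Fin n) ℂ :=
  (Matrix.posSemidef_conjTranspose_mul_self Y).sqrt

noncomputable def posPart (H : Matrix (Fin n) (Fin n) ℂ) : Matrix (Fin n) (Fin n) ℂ :=
  ((1 : ℂ) / 2) • (absMat H + H)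


lemma trace_re_nonneg {M : Matrix (Fin n) (Fin n) ℂ} (hM : M.PosSemidef) :
    0 ≤ M.trace.re := by
  have h : ∀ i, 0 ≤ (M i i).re := by
    intro i
    have h0 : 0 ≤ M i i := hM.diag_nonneg
    exact (Complex.le_def.mp h0).1
  have := Finset.sum_nonneg (fun i (_ : i ∈ Finset.univ) => h i)
  simpa [Matrix.trace, Matrix.diag, Complex.re_sum] using this

lemma trace_mul_re_nonneg {A B : Matrix (Fin n) (Fin n) ℂ}
    (hA : A.PosSemidef) (hB : B.PosSemidef) : 0 ≤ (A * B).trace.re := by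
  have h1 : (hA.sqrt * B * hA.sqrtᴴ).PosSemidef := hB.mul_mul_conjTranspose_same hA.sqrt
  rw [hA.posSemidef_sqrt.isHermitian.eq] at h1
  have h2 : (hA.sqrt * B * hA.sqrt).trace = (A * B).trace := by
    rw [trace_mul_cycle, (show hA.sqrt * hA.sqrt = A by
      have hU : (star hA.1.eigenvectorUnitary : Matrix (Fin n) (Fin n) ℂ) *
          (hA.1.eigenvectorUnitary : Matrix (Fin n) (Fin n) ℂ) = 1 :=
        Matrix.mem_unitaryGroup_iff'.mp hA.1.eigenvectorUnitary.2
      unfold Matrix.PosSemidef.sqrt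
      conv_rhs => rw [hA.1.spectral_theorem]
      have e : ∀ X Y Z W : Matrix (Fin n) (Fin n) ℂ, X * Y * Z * (X * W * Z) = X * (Y * (Z * X) * W) * Z := by
        intro X Y Z W; simp only [mul_assoc]
      rw [e, hU, mul_one, Matrix.diagonal_mul_diagonal]
      congr 3
      funext i
      simp only [Function.comp_apply]
      rw [← RCLike.ofReal_mul, Real.mul_self_sqrt (hA.eigenvalues_nonneg i)])]
  rw [← h2]
  exact trace_re_nonneg h1

lemma conj_psd {U D : Matrix (Fin n) (Fin n) ℂ} (hD : D.PosSemidef) :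
    (U * D * star U).PosSemidef := by
  rw [Matrix.star_eq_conjTranspose]
  exact hD.mul_mul_conjTranspose_same U

lemma conj_trace {U : Matrix (Fin n) (Fin n) ℂ} (hU : star U * U = 1)
    (X : Matrix (Fin n) (Fin n) ℂ) :
    (U * X * star U).trace = X.trace := by
  rw [trace_mul_cycle, hU, one_mul]

lemma conj_diag_mul {U : Matrix (Fin n) (Fin n) ℂ} (hU : star U * U = 1)
    (f g : Fin n → ℂ) :
    (U * Matrix.diagonal f * star U) * (U * Matrix.diagonal g * star U)
      = U * Matrix.diagonal (fun i => f i * g i) * star U := by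
  have h : (U * Matrix.diagonal f * star U) * (U * Matrix.diagonal g * star U)
      = U * (Matrix.diagonal f * ((star U * U) * (Matrix.diagonal g * star U))) := by
    simp only [mul_assoc]
  rw [h, hU, one_mul, ← Matrix.diagonal_mul_diagonal f g]
  simp only [mul_assoc]

/-- the nonlinear Ky Fan contraction principle: an order
preserving, positively homogeneous, unital, trace-subpreserving map on
positive definite matrices weakly majorizes downwards. -/
theorem nonlinear_kyfan_contraction {n : ℕ}
    (Φ : Matrix (Fin n) (Fin n) ℂ → Matrix (Fin n) (Fin n) ℂ)
    (hmap : ∀ C : Matrix (Fin n) (Fin n) ℂ, C.PosDef → (Φ C).PosDef)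
    (hmono : ∀ C₁ C₂ : Matrix (Fin n) (Fin n) ℂ, C₁.PosDef → C₂.PosDef →
      (C₂ - C₁).PosSemidef → (Φ C₂ - Φ C₁).PosSemidef)
    (hhom : ∀ α : ℝ, 0 < α → ∀ C : Matrix (Fin n) (Fin n) ℂ, C.PosDef →
      Φ ((α : ℂ) • C) = (α : ℂ) • Φ C)
    (hunit : Φ 1 = 1)
    (htr : ∀ C : Matrix (Fin n) (Fin n) ℂ, C.PosDef →
      (Φ C).trace.re ≤ C.trace.re)
    (C : Matrix (Fin n) (Fin n) ℂ) (hC : C.PosDef)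
    (hΦC : (Φ C).IsHermitian) :
    WeakMaj hΦC.eigenvalues hC.isHermitian.eigenvalues := by
  classical
  intro s
  set lam := hC.isHermitian.eigenvalues with hlam
  by_cases hs0 : s = ∅
  · exact ⟨∅, by simp [hs0]⟩
  have hk : 0 < s.card := Finset.card_pos.mpr (Finset.nonempty_of_ne_empty hs0)
  have hne : (Finset.univ.powersetCard s.card : Finset (Finset (Fin n))).Nonempty := by
    rw [Finset.powersetCard_nonempty]
    simpa using s.card_le_univ
  obtain ⟨t, htmem, htmax⟩ :=
    Finset.exists_max_image (Finset.univ.powersetCard s.card) (fun u => ∑ i ∈ u, lam i) hne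
  have htcard : t.card = s.card := Finset.mem_powersetCard_univ.mp htmem
  refine ⟨t, htcard, ?_⟩
  have htne : t.Nonempty := Finset.card_pos.mp (by omega)
  obtain ⟨i₀, hi₀, hmin⟩ := t.exists_min_image lam htne
  set μ := lam i₀ with hμ
  have hμpos : 0 < μ := hC.eigenvalues_pos i₀
  have hout : ∀ j ∉ t, lam j ≤ μ := by
    intro j hj
    by_contra hlt
    push_neg at hlt
    have hjmem : j ∉ t.erase i₀ := fun h => hj (Finset.mem_of_mem_erase h)
    have hmem' : insert j (t.erase i₀) ∈ Finset.univ.powersetCard s.card := by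
      rw [Finset.mem_powersetCard_univ, Finset.card_insert_of_notMem hjmem,
        Finset.card_erase_of_mem hi₀]
      omega
    have hsum := htmax _ hmem'
    rw [Finset.sum_insert hjmem] at hsum
    have h2 : ∑ i ∈ t.erase i₀, lam i + lam i₀ = ∑ i ∈ t, lam i :=
      Finset.sum_erase_add t _ hi₀
    linarith
  set ν : Fin n → ℝ := fun i => max (lam i) μ with hν
  set U : Matrix (Fin n) (Fin n) ℂ := ↑(hC.isHermitian.eigenvectorUnitary) with hUdef
  have hU' : star U * U = 1 := Matrix.mem_unitaryGroup_iff'.mp hC.isHermitian.eigenvectorUnitary.2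
  have hU : U * star U = 1 := Matrix.mem_unitaryGroup_iff.mp hC.isHermitian.eigenvectorUnitary.2
  have hspec : C = U * Matrix.diagonal (fun i => (lam i : ℂ)) * star U :=
    hC.isHermitian.spectral_theorem
  set Dm : Matrix (Fin n) (Fin n) ℂ := U * Matrix.diagonal (fun i => (ν i : ℂ)) * star U
    with hDdef
  have hDC : (Dm - C).PosSemidef := by
    have hE : Dm - C = U * Matrix.diagonal (fun i => ((ν i - lam i : ℝ) : ℂ)) * star U := by
      rw [hDdef]
      conv_lhs => rw [hspec]
      rw [← sub_mul, ← mul_sub, Matrix.diagonal_sub]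
      congr 2
      funext i
      push_cast
      simp [Pi.sub_apply]
    rw [hE]
    exact conj_psd (Matrix.posSemidef_diagonal_iff.mpr fun i =>
      Complex.zero_le_real.mpr (sub_nonneg.mpr (le_max_left _ _)))
  have hD : Dm.PosDef := by
    have h := hC.add_posSemidef hDC
    have e : C + (Dm - C) = Dm := by abel
    rwa [e] at h
  have hμ1 : U * Matrix.diagonal (fun _ : Fin n => (μ : ℂ)) * star U
      = (μ : ℂ) • (1 : Matrix (Fin n) (Fin n) ℂ) := by
    rw [← Matrix.smul_one_eq_diagonal, Matrix.mul_smul, mul_one, Matrix.smul_mul, hU]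
  have hDμ : (Dm - (μ : ℂ) • 1).PosSemidef := by
    have hE : Dm - (μ : ℂ) • 1
        = U * Matrix.diagonal (fun i => ((ν i - μ : ℝ) : ℂ)) * star U := by
      rw [hDdef, ← hμ1, ← sub_mul, ← mul_sub, Matrix.diagonal_sub]
      congr 2
      funext i
      push_cast
      simp [Pi.sub_apply]
    rw [hE]
    exact conj_psd (Matrix.posSemidef_diagonal_iff.mpr fun i =>
      Complex.zero_le_real.mpr (sub_nonneg.mpr (le_max_right _ _)))
  have hμ1pos : ((μ : ℂ) • (1 : Matrix (Fin n) (Fin n) ℂ)).PosDef := by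
    rw [Matrix.smul_one_eq_diagonal]
    exact Matrix.posDef_diagonal_iff.mpr fun i => Complex.zero_lt_real.mpr hμpos
  have hone : (1 : Matrix (Fin n) (Fin n) ℂ).PosDef := by
    rw [← Matrix.diagonal_one]
    exact Matrix.posDef_diagonal_iff.mpr fun i => zero_lt_one
  have hΦμ : Φ ((μ : ℂ) • 1) = (μ : ℂ) • 1 := by
    rw [hhom μ hμpos 1 hone, hunit]
  have hBA : (Φ Dm - Φ C).PosSemidef := hmono C Dm hC hD hDC
  have hBμ : (Φ Dm - (μ : ℂ) • 1).PosSemidef := by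
    have h := hmono ((μ : ℂ) • 1) Dm hμ1pos hD hDμ
    rwa [hΦμ] at h
  set lamA := hΦC.eigenvalues with hlamA
  set V : Matrix (Fin n) (Fin n) ℂ := ↑(hΦC.eigenvectorUnitary) with hVdef
  have hV' : star V * V = 1 := Matrix.mem_unitaryGroup_iff'.mp hΦC.eigenvectorUnitary.2
  have hV : V * star V = 1 := Matrix.mem_unitaryGroup_iff.mp hΦC.eigenvectorUnitary.2
  have hspecA : Φ C = V * Matrix.diagonal (fun i => (lamA i : ℂ)) * star V :=
    hΦC.spectral_theorem
  set g : Fin n → ℂ := fun i => if i ∈ s then 1 else 0 with hg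
  set g' : Fin n → ℂ := fun i => if i ∈ sᶜ then 1 else 0 with hg'
  set P := V * Matrix.diagonal g * star V with hP
  set Q := V * Matrix.diagonal g' * star V with hQ
  have hPpsd : P.PosSemidef := conj_psd (Matrix.posSemidef_diagonal_iff.mpr fun i => by
    by_cases h : i ∈ s <;> simp [hg, h, zero_le_one])
  have hQpsd : Q.PosSemidef := conj_psd (Matrix.posSemidef_diagonal_iff.mpr fun i => by
    by_cases h : i ∈ s <;> simp [hg', Finset.mem_compl, h, zero_le_one])
  have hPQ : P + Q = 1 := by
    rw [hP, hQ, ← add_mul, ← mul_add, Matrix.diagonal_add]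
    have hgsum : (fun i => g i + g' i) = fun _ : Fin n => (1 : ℂ) := by
      funext i
      by_cases h : i ∈ s <;> simp [hg, hg', h]
    rw [hgsum, Matrix.diagonal_one, mul_one, hV]
  have traceP : (Φ C * P).trace = ((∑ i ∈ s, lamA i : ℝ) : ℂ) := by
    rw [hP]
    conv_lhs => rw [hspecA]
    rw [conj_diag_mul hV', conj_trace hV', Matrix.trace_diagonal]
    push_cast
    simp [hg, mul_ite, mul_one, mul_zero, Finset.sum_ite_mem, Finset.univ_inter]
  have traceQc : Q.trace = ((sᶜ.card : ℕ) : ℂ) := by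
    rw [hQ, conj_trace hV', Matrix.trace_diagonal]
    simp only [hg', Finset.mem_compl]
    rw [← Finset.sum_add_sum_compl s,
      Finset.sum_congr rfl (fun i hi => if_neg (by simpa using hi)),
      Finset.sum_congr rfl (fun i hi => if_pos (Finset.mem_compl.mp hi))]
    simp
  have traceD : Dm.trace = ((∑ i, ν i : ℝ) : ℂ) := by
    rw [hDdef, conj_trace hU', Matrix.trace_diagonal]
    push_cast
    rfl
  have i1 : (Φ C * P).trace.re ≤ (Φ Dm * P).trace.re := by
    have h := trace_mul_re_nonneg hBA hPpsd
    rw [sub_mul, Matrix.trace_sub, Complex.sub_re] at h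
    linarith
  have i2 : μ * ((sᶜ.card : ℕ) : ℝ) ≤ (Φ Dm * Q).trace.re := by
    have h := trace_mul_re_nonneg hBμ hQpsd
    rw [sub_mul, Matrix.trace_sub, Complex.sub_re] at h
    have h2 : (((μ : ℂ) • (1 : Matrix (Fin n) (Fin n) ℂ)) * Q).trace
        = ((μ * ((sᶜ.card : ℕ) : ℝ) : ℝ) : ℂ) := by
      rw [Matrix.smul_mul, one_mul, Matrix.trace_smul, traceQc, smul_eq_mul]
      push_cast
      ring
    rw [h2, Complex.ofReal_re] at h
    linarith
  have i3 : (Φ Dm * P).trace.re + (Φ Dm * Q).trace.re = (Φ Dm).trace.re := by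
    rw [← Complex.add_re, ← Matrix.trace_add, ← mul_add, hPQ, mul_one]
  have i4 : (Φ Dm).trace.re ≤ Dm.trace.re := htr Dm hD
  have i5 : Dm.trace.re = (∑ i ∈ t, lam i) + μ * ((sᶜ.card : ℕ) : ℝ) := by
    rw [traceD, Complex.ofReal_re]
    have hsplit : ∑ i ∈ t, ν i + ∑ i ∈ tᶜ, ν i = ∑ i, ν i := Finset.sum_add_sum_compl t ν
    have h1 : ∑ i ∈ t, ν i = ∑ i ∈ t, lam i :=
      Finset.sum_congr rfl fun i hi => max_eq_left (hmin i hi)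
    have h2 : ∑ i ∈ tᶜ, ν i = ((tᶜ.card : ℕ) : ℝ) * μ := by
      rw [Finset.sum_congr rfl fun i hi => max_eq_right (hout i (Finset.mem_compl.mp hi))]
      rw [Finset.sum_const, nsmul_eq_mul]
    have hcards : ((tᶜ.card : ℕ) : ℝ) = ((sᶜ.card : ℕ) : ℝ) := by
      rw [Finset.card_compl, Finset.card_compl, htcard]
    rw [← hsplit, h1, h2, hcards]
    ring
  have hlhs : (∑ i ∈ s, lamA i) = (Φ C * P).trace.re := by
    rw [traceP, Complex.ofReal_re]
  linarith


end Heron
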